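/- Let a and b be integers with 0 < a < b such that a does not divide b, and suppose the continued fraction expansion of b/a has exactly two partial quotients, b/a = [a₀, a₁] (i.e. n = 1). Then the Sprague–Grundy value of the M-Euclid position {a,b} is 𝒢_M(a,b) = a₀ = ⌊b/a⌋. In particular, if a < b < 2a and a ∤ b, then 𝒢_M(a,b) = 1. -/
import Mathlib


/-- The minimum excludant of a set of natural numbers: the least nonnegative
integer not belonging to the set. -/
noncomputable def mex (S : Set ℕ) : ℕ := sInf {n : ℕ | n ∉ S}

/-- `cf a b` is the continued fraction expansion `[a₀, a₁, …, aₙ]` of `b / a`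
(for `0 < a`), computed by the Euclidean algorithm; the convention `aₙ > 1`
whenever `n > 0` holds automatically. -/
def cf (a b : ℕ) : List ℕ :=
  if h : a = 0 then [] else (b / a) :: cf (b % a) a
termination_by a
decreasing_by exact Nat.mod_lt _ (Nat.pos_of_ne_zero h)

/-- Moves in M-Euclid.  Positions are unordered pairs of positive integers,
represented as sorted pairs; positions in which one entry is a positive integer
multiple of the other (in particular pairs with equal entries) are terminal;
from a nonterminal `{a, b}` with `a < b` one may move to `{a, b − k·a}` for any
positive integer `k` with `b − k·a ≥ 1`. -/
def meuclidMove (p q : ℕ × ℕ) : Prop :=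
  0 < p.1 ∧ p.1 < p.2 ∧ ¬ p.1 ∣ p.2 ∧
    ∃ k : ℕ, 0 < k ∧ k * p.1 < p.2 ∧
      q = (min p.1 (p.2 - k * p.1), max p.1 (p.2 - k * p.1))

/-- The Sprague–Grundy function of M-Euclid:
`𝒢_M(p) = mex { 𝒢_M(q) : q an option of p }`. -/
noncomputable def meuclidGrundy (p : ℕ × ℕ) : ℕ :=
  mex {g : ℕ | ∃ q : ℕ × ℕ, ∃ _ : meuclidMove p q, meuclidGrundy q = g}
termination_by p.1 + p.2
decreasing_by
  rename_i hq
  obtain ⟨h1, h2, hnd, k, hk, hle, rfl⟩ := hq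
  have : p.1 ≤ k * p.1 := Nat.le_mul_of_pos_left p.1 hk
  simp only [Nat.min_def, Nat.max_def]
  split <;> omega

lemma mex_Iio (q : ℕ) : mex (Set.Iio q) = q := by
  unfold mex
  have h : {n : ℕ | n ∉ Set.Iio q} = Set.Ici q := by
    ext n; simp [Set.mem_Iio, not_lt]
  rw [h]; exact csInf_Ici

lemma grundy_terminal (p : ℕ × ℕ) (h : p.1 ∣ p.2) : meuclidGrundy p = 0 := by
  rw [meuclidGrundy]
  have he : {g : ℕ | ∃ q : ℕ × ℕ, ∃ _ : meuclidMove p q, meuclidGrundy q = g} = ∅ := by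
    ext g
    simp only [Set.mem_setOf_eq, Set.mem_empty_iff_false, iff_false]
    rintro ⟨q, ⟨_, _, hnd, _⟩, _⟩; exact hnd h
  rw [he]
  apply Nat.sInf_eq_zero.mpr
  left; simp

lemma grundy_main : ∀ b a q r : ℕ, 0 < a → 0 < r → r < a → r ∣ a → 1 ≤ q →
    b = q * a + r → meuclidGrundy (a, b) = q := by
  intro b
  induction b using Nat.strong_induction_on with
  | _ b ih =>
    intro a q r ha hr0 hra hdvd hq1 hbqr
    have hmod : b % a = r := by
      rw [hbqr, Nat.mul_comm, Nat.mul_add_mod]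
      exact Nat.mod_eq_of_lt hra
    have hnd : ¬ a ∣ b := fun hd => by
      have h0 : b % a = 0 := Nat.eq_zero_of_dvd_of_lt ((Nat.dvd_mod_iff (dvd_refl a)).mpr hd) (Nat.mod_lt b ha)
      omega
    have haq : a ≤ q * a := Nat.le_mul_of_pos_left a hq1
    rw [meuclidGrundy]
    have hset : {g : ℕ | ∃ p : ℕ × ℕ, ∃ _ : meuclidMove (a, b) p, meuclidGrundy p = g}
        = Set.Iio q := by
      ext g
      simp only [Set.mem_setOf_eq, Set.mem_Iio]
      constructor
      · rintro ⟨p, ⟨-, -, -, k, hk, hkb, rfl⟩, rfl⟩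
        simp only at hkb ⊢
        have hkq : k ≤ q := by
          by_contra hc
          have h1 : (q + 1) * a ≤ k * a := Nat.mul_le_mul_right a (by omega)
          have h2 : (q + 1) * a = q * a + a := by ring
          omega
        rcases eq_or_lt_of_le hkq with heq | hlt
        · subst heq
          have hb : b - k * a = r := by omega
          rw [hb, min_eq_right (le_of_lt hra), max_eq_left (le_of_lt hra),
            grundy_terminal _ hdvd]
          omega
        · have hsum : k * a + (q - k) * a = q * a := by
            rw [← Nat.add_mul]; congr 1; omega
          have hge : a ≤ (q - k) * a := Nat.le_mul_of_pos_left a (by omega)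
          have hb : b - k * a = (q - k) * a + r := by omega
          have hlta : a < b - k * a := by omega
          have hka : 0 < k * a := Nat.mul_pos hk ha
          rw [min_eq_left (le_of_lt hlta), max_eq_right (le_of_lt hlta)]
          rw [ih (b - k * a) (by omega) a (q - k) r ha hr0 hra hdvd (by omega) hb]
          omega
      · intro hg
        have hk0 : 0 < q - g := by omega
        have hsum : (q - g) * a + g * a = q * a := by
          rw [← Nat.add_mul]; congr 1; omega
        have hkb : (q - g) * a < b := by omega
        have hb' : b - (q - g) * a = g * a + r := by omega
        refine ⟨_, ⟨ha, by omega, hnd, q - g, hk0, hkb, rfl⟩, ?_⟩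
        simp only
        rcases Nat.eq_zero_or_pos g with hg0 | hg0
        · subst hg0
          have hb2 : b - (q - 0) * a = r := by omega
          rw [hb2, min_eq_right (le_of_lt hra), max_eq_left (le_of_lt hra)]
          exact grundy_terminal _ hdvd
        · have hga : a ≤ g * a := Nat.le_mul_of_pos_left a hg0
          have hlt : a < b - (q - g) * a := by omega
          have hka : 0 < (q - g) * a := Nat.mul_pos hk0 ha
          rw [min_eq_left (le_of_lt hlt), max_eq_right (le_of_lt hlt)]
          exact ih _ (by omega) a g r ha hr0 hra hdvd hg0 hb'
    rw [hset, mex_Iio]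

/-- **Base case `n = 1` of Theorem 2.**  If `0 < a < b`, `a ∤ b`, and the
continued fraction expansion of `b/a` is `[a₀, a₁]` (i.e. it has exactly two
partial quotients), then `𝒢_M(a,b) = a₀ = ⌊b/a⌋`; in particular if moreover
`a < b < 2a` then `𝒢_M(a,b) = 1`. -/
theorem meuclidGrundy_of_length_two (a b : ℕ) (ha : 0 < a) (hab : a < b) (hnd : ¬ a ∣ b)
    (hn : (cf a b).length = 2) :
    meuclidGrundy (a, b) = (cf a b).getD 0 0 ∧ (cf a b).getD 0 0 = b / a ∧
      (b < 2 * a → meuclidGrundy (a, b) = 1) := by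
  have hr0 : b % a ≠ 0 := fun h => hnd (Nat.dvd_of_mod_eq_zero h)
  have e1 : cf a b = (b / a) :: cf (b % a) a := by rw [cf]; simp [ha.ne']
  have e2 : cf (b % a) a = (a / (b % a)) :: cf (a % (b % a)) (b % a) := by
    rw [cf]; simp [hr0]
  have h3 : a % (b % a) = 0 := by
    by_contra h
    have e3 : cf (a % (b % a)) (b % a) =
        ((b % a) / (a % (b % a))) :: cf ((b % a) % (a % (b % a))) (a % (b % a)) := by
      rw [cf]; simp [h]
    rw [e1, e2, e3] at hn
    simp at hn
  have hdvd : b % a ∣ a := Nat.dvd_of_mod_eq_zero h3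
  have hq1 : 1 ≤ b / a := (Nat.one_le_div_iff ha).mpr (le_of_lt hab)
  have hbqr : b = b / a * a + b % a := by
    rw [Nat.mul_comm]; exact (Nat.div_add_mod b a).symm
  have hmain : meuclidGrundy (a, b) = b / a :=
    grundy_main b a (b / a) (b % a) ha (Nat.pos_of_ne_zero hr0) (Nat.mod_lt b ha) hdvd hq1 hbqr
  refine ⟨by rw [e1, hmain]; rfl, by rw [e1]; rfl, fun hlt => ?_⟩
  rw [hmain]
  exact Nat.div_eq_of_lt_le (by omega) (by omega)
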